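/- arXiv:2409.18845 — 2 statements merged into one kernel-verified Lean document; each statement's English description precedes it below -/
import Mathlib

section
/- Let R be an integral domain with fraction field K such that K is not algebraically closed. Then for any finite list of polynomials P_1,...,P_n in R[x_1,...,x_k], there exists a single polynomial Q in R[x_1,...,x_k] such that for all points a in R^k, P_1(a) = ... = P_n(a) = 0 if and only if Q(a) = 0. -/
open Polynomial Finset

/-- Key combiner lemma: over a domain whose fraction field is not algebraically closed,
there is a "norm form" in two variables vanishing only at the origin. -/
lemma exists_combiner {R : Type*} [CommRing R] [IsDomain R]
    (hK : ¬ IsAlgClosed (FractionRing R)) :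
    ∃ (d : ℕ) (c : ℕ → R), 0 < d ∧
      ∀ u v : R, (∑ i ∈ Finset.range (d + 1), c i * u ^ i * v ^ (d - i)) = 0 ↔
        u = 0 ∧ v = 0 := by
  set K := FractionRing R
  have H : ¬ ∀ p : K[X], p.Monic → Irreducible p → ∃ x, p.eval x = 0 := by
    intro H; exact hK (IsAlgClosed.of_exists_root K H)
  push_neg at H
  obtain ⟨p, hmonic, hirr, hroot⟩ := H
  set φ : R →+* K := algebraMap R K
  have hφ : Function.Injective φ := IsFractionRing.injective R K
  set q : R[X] := IsLocalization.integerNormalization (nonZeroDivisors R) p with hq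
  obtain ⟨b, hb⟩ := IsLocalization.integerNormalization_map_to_map (nonZeroDivisors R) p
  have hb0 : (algebraMap R K) (b : R) ≠ 0 :=
    IsFractionRing.to_map_ne_zero_of_mem_nonZeroDivisors b.2
  have hb' : q.map φ = Polynomial.C (φ (b : R)) * p := by
    rw [hb, ← algebraMap_smul K (b : R) p, smul_eq_C_mul]
  have hp0 : p ≠ 0 := hmonic.ne_zero
  have hq0 : q ≠ 0 := fun h =>
    hp0 (IsFractionRing.integerNormalization_eq_zero_iff.mp h)
  have hdegp : 1 ≤ p.natDegree := hirr.natDegree_pos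
  have hmapdeg : (q.map φ).natDegree = p.natDegree := by
    rw [hb', natDegree_C_mul hb0]
  have hd : 1 ≤ q.natDegree := le_trans (hmapdeg ▸ hdegp) natDegree_map_le
  have hd0 : q.natDegree ≠ 0 := Nat.one_le_iff_ne_zero.mp hd
  refine ⟨q.natDegree, q.coeff, hd, fun u v => ?_⟩
  constructor
  · intro hsum
    set d := q.natDegree
    have hsumK : (∑ i ∈ Finset.range (d + 1), φ (q.coeff i) * φ u ^ i * φ v ^ (d - i)) = 0 := by
      have := congrArg φ hsum
      simpa [map_sum, map_mul, map_pow] using this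
    have hv : v = 0 := by
      by_contra hv
      have hφv : φ v ≠ 0 := fun h => hv (hφ (by simpa using h))
      -- relate the sum to evaluation of q.map φ at φu/φv
      have heval : (q.map φ).eval (φ u / φ v) * (φ v) ^ d =
          ∑ i ∈ Finset.range (d + 1), φ (q.coeff i) * φ u ^ i * φ v ^ (d - i) := by
        rw [eval_eq_sum_range' (lt_of_le_of_lt natDegree_map_le (Nat.lt_succ_self d))]
        rw [Finset.sum_mul]
        refine Finset.sum_congr rfl fun i hi => ?_
        rw [Finset.mem_range, Nat.lt_succ_iff] at hi
        rw [coeff_map, div_pow]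
        have hvd : φ v ^ d = φ v ^ i * φ v ^ (d - i) := by
          rw [← pow_add, Nat.add_sub_cancel' hi]
        rw [hvd]
        have hvi : φ v ^ i ≠ 0 := pow_ne_zero i hφv
        calc _ = φ (q.coeff i) * φ u ^ i * (φ v ^ i / φ v ^ i) * φ v ^ (d - i) := by ring
          _ = _ := by rw [div_self hvi, mul_one]
      have hev0 : (q.map φ).eval (φ u / φ v) = 0 := by
        have := heval.trans hsumK
        exact (mul_eq_zero.mp this).resolve_right (pow_ne_zero _ hφv)
      rw [hb'] at hev0
      simp only [eval_mul, eval_C] at hev0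
      exact hroot _ ((mul_eq_zero.mp hev0).resolve_left hb0)
    have hu : u = 0 := by
      subst hv
      have : (∑ i ∈ Finset.range (d + 1), q.coeff i * u ^ i * (0:R) ^ (d - i)) =
          q.coeff d * u ^ d := by
        rw [Finset.sum_eq_single d]
        · simp
        · intro i hi hne
          rw [Finset.mem_range, Nat.lt_succ_iff] at hi
          have : 0 < d - i := Nat.sub_pos_of_lt (lt_of_le_of_ne hi hne)
          rw [zero_pow this.ne', mul_zero]
        · intro h; exact absurd (Finset.self_mem_range_succ d) h
      rw [this] at hsum
      have hc : q.coeff d ≠ 0 := leadingCoeff_ne_zero.mpr hq0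
      have := (mul_eq_zero.mp hsum).resolve_left hc
      exact pow_eq_zero_iff hd0 |>.mp this
    exact ⟨hu, hv⟩
  · rintro ⟨rfl, rfl⟩
    refine Finset.sum_eq_zero fun i hi => ?_
    rcases Nat.eq_zero_or_pos i with h0 | h0
    · subst h0
      simp [zero_pow hd0]
    · simp [zero_pow h0.ne']

theorem frac_not_algClosed_system_to_single {R : Type*} [CommRing R] [IsDomain R]
    (hK : ¬ IsAlgClosed (FractionRing R))
    (k n : ℕ) (P : Fin n → MvPolynomial (Fin k) R) :
    ∃ Q : MvPolynomial (Fin k) R,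
      ∀ a : Fin k → R, (∀ i, MvPolynomial.eval a (P i) = 0) ↔ MvPolynomial.eval a Q = 0 := by
  obtain ⟨d, c, hd, hc⟩ := exists_combiner hK
  induction n with
  | zero => exact ⟨0, fun a => iff_of_true (fun i => i.elim0) (map_zero _)⟩
  | succ m ih =>
    obtain ⟨Q', hQ'⟩ := ih (fun i => P i.succ)
    refine ⟨∑ i ∈ Finset.range (d + 1),
        MvPolynomial.C (c i) * (P 0) ^ i * Q' ^ (d - i), fun a => ?_⟩
    have heval : MvPolynomial.eval a (∑ i ∈ Finset.range (d + 1),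
        MvPolynomial.C (c i) * (P 0) ^ i * Q' ^ (d - i)) =
        ∑ i ∈ Finset.range (d + 1),
          c i * (MvPolynomial.eval a (P 0)) ^ i * (MvPolynomial.eval a Q') ^ (d - i) := by
      simp [map_sum]
    rw [heval, hc]
    constructor
    · intro h
      exact ⟨h 0, (hQ' a).mp fun i => h i.succ⟩
    · rintro ⟨h0, hQ⟩ i
      rcases Fin.eq_zero_or_eq_succ i with rfl | ⟨j, rfl⟩
      · exact h0
      · exact (hQ' a).mpr hQ j
end

section
/- There exists a surjective function g : N → N that preserves computable enumerability (the image of every c.e. subset of N under g is c.e.) but is not computable. -/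
namespace RePreserve

open Nat.Partrec (Code)
open Nat.Partrec.Code

/-- The (cylinderified) halting set. -/
def S (n : ℕ) : Prop := ((Denumerable.ofNat Code n.unpair.1).eval 0).Dom

theorem S_not_computable : ¬ComputablePred S := by
  intro h
  apply ComputablePred.halting_problem 0
  obtain ⟨f, hf, hfe⟩ := ComputablePred.computable_iff.1 h
  refine ComputablePred.computable_iff.2
    ⟨fun c => f (Nat.pair (Encodable.encode c) 0), ?_, ?_⟩
  · exact hf.comp ((Primrec₂.natPair.comp Primrec.encode (Primrec.const 0)).to_comp)
  · funext c
    have h1 : S (Nat.pair (Encodable.encode c) 0) = ((c.eval 0).Dom) := by simp [S]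
    rw [← h1, hfe]

/-- decidable "exact entry" predicate, as a Bool function. -/
def d (m : ℕ) : Bool :=
  (evaln (m.unpair.1.unpair.2 + 1) (Denumerable.ofNat Code m.unpair.1.unpair.1) 0).isSome
    && !(evaln m.unpair.1.unpair.2 (Denumerable.ofNat Code m.unpair.1.unpair.1) 0).isSome

theorem d_primrec : Primrec d := by
  have h1 : Primrec fun m : ℕ =>
      (evaln (m.unpair.1.unpair.2 + 1) (Denumerable.ofNat Code m.unpair.1.unpair.1) 0).isSome :=
    Primrec.option_isSome.comp <| primrec_evaln.comp <|
      ((Primrec.succ.comp (Primrec.snd.comp (Primrec.unpair.comp (Primrec.fst.comp Primrec.unpair)))).pair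
        ((Primrec.ofNat Code).comp (Primrec.fst.comp (Primrec.unpair.comp (Primrec.fst.comp Primrec.unpair))))).pair
        (Primrec.const 0)
  have h2 : Primrec fun m : ℕ =>
      !(evaln (m.unpair.1.unpair.2) (Denumerable.ofNat Code m.unpair.1.unpair.1) 0).isSome :=
    Primrec.not.comp <| Primrec.option_isSome.comp <| primrec_evaln.comp <|
      (((Primrec.snd.comp (Primrec.unpair.comp (Primrec.fst.comp Primrec.unpair)))).pair
        ((Primrec.ofNat Code).comp (Primrec.fst.comp (Primrec.unpair.comp (Primrec.fst.comp Primrec.unpair))))).pair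
        (Primrec.const 0)
  exact Primrec.and.comp h1 h2

/-- Map a "witness" to the element of S it witnesses. -/
def F (m : ℕ) : ℕ := Nat.pair m.unpair.1.unpair.1 m.unpair.2

theorem F_primrec : Primrec F :=
  Primrec₂.natPair.comp (Primrec.fst.comp (Primrec.unpair.comp (Primrec.fst.comp Primrec.unpair)))
    (Primrec.snd.comp Primrec.unpair)

theorem S_of_d {m : ℕ} (hm : d m = true) : S (F m) := by
  simp only [d, Bool.and_eq_true, Bool.not_eq_true', Option.isSome_iff_exists] at hm
  obtain ⟨⟨x, hx⟩, -⟩ := hm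
  simp only [S, F, Nat.unpair_pair]
  exact Part.dom_iff_mem.2 ⟨x, evaln_sound hx⟩

theorem d_of_S {n : ℕ} (hn : S n) : ∃ m, d m = true ∧ F m = n := by
  simp only [S] at hn
  obtain ⟨x, hx⟩ := Part.dom_iff_mem.1 hn
  obtain ⟨k, hk⟩ := evaln_complete.1 hx
  have hex : ∃ k, ((evaln k (Denumerable.ofNat Code n.unpair.1) 0).isSome : Prop) :=
    ⟨k, by rw [hk]; rfl⟩
  classical
  set k₀ := Nat.find hex with hk₀
  have hk₀pos : k₀ ≠ 0 := by
    intro h0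
    have := Nat.find_spec hex
    rw [← hk₀, h0] at this
    simp [evaln] at this
  obtain ⟨s, hs⟩ := Nat.exists_eq_succ_of_ne_zero hk₀pos
  refine ⟨Nat.pair (Nat.pair n.unpair.1 s) n.unpair.2, ?_, ?_⟩
  · simp only [d, Nat.unpair_pair, Bool.and_eq_true, Bool.not_eq_true']
    constructor
    · have := Nat.find_spec hex
      rw [← hk₀, hs] at this
      simpa using this
    · simpa using Nat.find_min hex (show s < k₀ by omega)
  · simp [F, Nat.pair_unpair]

theorem stage_unique {c : Code} {s s' : ℕ}
    (hs : (evaln (s + 1) c 0).isSome = true)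
    (hs2 : (evaln s c 0).isSome = false)
    (ht : (evaln (s' + 1) c 0).isSome = true)
    (ht2 : (evaln s' c 0).isSome = false) : s = s' := by
  by_contra hne
  rcases Nat.lt_or_ge s s' with hlt | hge
  · obtain ⟨x, hx⟩ := Option.isSome_iff_exists.1 hs
    have hmem := evaln_mono (show s + 1 ≤ s' from hlt) hx
    rw [Option.mem_def] at hmem
    rw [hmem] at ht2
    simp at ht2
  · have hlt : s' < s := lt_of_le_of_ne hge (Ne.symm hne)
    obtain ⟨x, hx⟩ := Option.isSome_iff_exists.1 ht
    have hmem := evaln_mono (show s' + 1 ≤ s from hlt) hx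
    rw [Option.mem_def] at hmem
    rw [hmem] at hs2
    simp at hs2

theorem F_injOn {m m' : ℕ} (hm : d m = true) (hm' : d m' = true) (h : F m = F m') : m = m' := by
  simp only [F] at h
  obtain ⟨h1, h2⟩ := Nat.pair_eq_pair.1 h
  simp only [d, Bool.and_eq_true, Bool.not_eq_true'] at hm hm'
  rw [h1] at hm
  have hs : m.unpair.1.unpair.2 = m'.unpair.1.unpair.2 :=
    stage_unique hm.1 hm.2 hm'.1 hm'.2
  have hfst : m.unpair.1 = m'.unpair.1 := by
    rw [← Nat.pair_unpair m.unpair.1, ← Nat.pair_unpair m'.unpair.1, h1, hs]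
  rw [← Nat.pair_unpair m, ← Nat.pair_unpair m', hfst, h2]

theorem d_unbounded : ∀ v : ℕ, ∃ x, v < x ∧ d x = true := by
  intro v
  have hS : S (Nat.pair (Encodable.encode Code.zero) 0) := by
    rw [S]
    simp only [Nat.unpair_pair, Denumerable.ofNat_encode]
    exact Part.dom_iff_mem.2 ⟨0, by simp only [eval]; exact Part.mem_some 0⟩
  obtain ⟨m, hm, hFm⟩ := d_of_S hS
  refine ⟨Nat.pair m.unpair.1 (v + 1), ?_, ?_⟩
  · calc v < v + 1 := Nat.lt_succ_self v
      _ ≤ Nat.pair m.unpair.1 (v + 1) := Nat.right_le_pair _ _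
  · simp only [d, Nat.unpair_pair] at hm ⊢
    exact hm

theorem nextp_ex (v : ℕ) : ∃ x, d (v + 1 + x) = true := by
  obtain ⟨x, hvx, hx⟩ := d_unbounded v
  exact ⟨x - (v + 1), by rwa [show v + 1 + (x - (v + 1)) = x by omega]⟩

/-- The least element of `{m | d m}` strictly above `v`. -/
def nextp (v : ℕ) : ℕ := v + 1 + Nat.find (nextp_ex v)

theorem nextp_computable : Computable nextp := by
  have hc2 : Computable₂ fun v x : ℕ => d (v + 1 + x) :=
    (d_primrec.comp
      (Primrec.nat_add.comp (Primrec.succ.comp Primrec.fst) Primrec.snd)).to_comp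
  have hadd : Computable₂ fun v x : ℕ => v + 1 + x :=
    (Primrec.nat_add.comp (Primrec.succ.comp Primrec.fst) Primrec.snd).to_comp
  have hp : Partrec fun v =>
      (Nat.rfind fun x => (fun x : ℕ => d (v + 1 + x) : ℕ →. Bool) x).map
        fun x => v + 1 + x :=
    Partrec.map (Partrec.rfind hc2.partrec₂) hadd
  apply hp.of_eq_tot
  intro v
  rw [Part.mem_map_iff]
  refine ⟨Nat.find (nextp_ex v), ?_, rfl⟩
  refine Nat.mem_rfind.2 ?_
  constructor
  · exact Part.mem_some_iff.2 (Nat.find_spec (nextp_ex v)).symm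
  · intro m hm
    have hfm : d (v + 1 + m) = false := by
      simpa using Nat.find_min (nextp_ex v) hm
    exact Part.mem_some_iff.2 hfm.symm

theorem d_nextp (v : ℕ) : d (nextp v) = true := Nat.find_spec (nextp_ex v)

theorem lt_nextp (v : ℕ) : v < nextp v := by
  have : nextp v = v + 1 + Nat.find (nextp_ex v) := rfl
  omega

theorem nextp_eq {v n : ℕ} (hvn : v < n) (hn : d n = true)
    (hmid : ∀ x, v < x → x < n → ¬d x = true) : nextp v = n := by
  have hle : nextp v ≤ n := by
    have hw : d (v + 1 + (n - (v + 1))) = true := by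
      rwa [show v + 1 + (n - (v + 1)) = n by omega]
    have := Nat.find_min' (nextp_ex v) hw
    have h2 : nextp v = v + 1 + Nat.find (nextp_ex v) := rfl
    omega
  rcases Nat.lt_or_ge (nextp v) n with hlt | hge
  · exact absurd (d_nextp v) (hmid _ (lt_nextp v) hlt)
  · omega

/-- The least element of `{m | d m}`. -/
def first : ℕ := bif d 0 then 0 else nextp 0

theorem first_computable : Computable fun _ : ℕ => first := Computable.const first

/-- `e` enumerates `{m | d m}` in increasing order. -/
def e (m : ℕ) : ℕ := Nat.rec first (fun _ ih => nextp ih) m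

theorem e_computable : Computable e := by
  have := Computable.nat_rec (α := ℕ) (σ := ℕ) (f := id) (g := fun _ => first)
    (h := fun _ p => nextp p.2) Computable.id (Computable.const first)
    (nextp_computable.comp (Computable.snd.comp Computable.snd)).to₂
  exact this.of_eq fun m => rfl

theorem d_e (m : ℕ) : d (e m) = true := by
  induction m with
  | zero =>
    show d first = true
    unfold first
    cases hd : d 0 with
    | true => simp [hd]
    | false => simp [hd, d_nextp]
  | succ m _ => exact d_nextp (e m)

theorem e_strictMono : StrictMono e :=
  strictMono_nat_of_lt_succ fun n => lt_nextp (e n)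

theorem e_surj {n : ℕ} (hn : d n = true) : ∃ m, e m = n := by
  induction n using Nat.strong_induction_on with
  | _ n ih =>
  by_cases hex : ∃ n', n' < n ∧ d n' = true
  · obtain ⟨n', hn', hdn'⟩ := hex
    have hn1 : 1 ≤ n := by omega
    set N := Nat.findGreatest (fun x => d x = true) (n - 1) with hN
    have hPN : d N = true :=
      Nat.findGreatest_spec (P := fun x => d x = true) (show n' ≤ n - 1 by omega) hdn'
    have hNle : N ≤ n - 1 := Nat.findGreatest_le _
    obtain ⟨m, hm⟩ := ih N (by omega) hPN
    refine ⟨m + 1, ?_⟩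
    show nextp (e m) = n
    rw [hm]
    apply nextp_eq (by omega) hn
    intro x hNx hxn
    exact Nat.findGreatest_is_greatest (hN ▸ hNx) (by omega)
  · push_neg at hex
    refine ⟨0, ?_⟩
    show first = n
    unfold first
    cases hd : d 0 with
    | true =>
      have : n = 0 := by
        by_contra h0
        exact absurd hd (hex 0 (by omega))
      simp [this]
    | false =>
      have h0 : 0 < n := by
        rcases Nat.eq_zero_or_pos n with h | h
        · rw [h] at hn; rw [hn] at hd; cases hd
        · exact h
      simp only [Bool.cond_false]
      exact nextp_eq h0 hn fun x hx hxn => by simpa using (hex x hxn)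

/-- The injective computable enumeration of S. -/
def h (m : ℕ) : ℕ := F (e m)

theorem h_computable : Computable h := F_primrec.to_comp.comp e_computable

theorem h_injective : Function.Injective h := fun a b hab =>
  e_strictMono.injective (F_injOn (d_e a) (d_e b) hab)

theorem h_range {n : ℕ} : (∃ m, h m = n) ↔ S n := by
  constructor
  · rintro ⟨m, rfl⟩
    exact S_of_d (d_e m)
  · intro hS
    obtain ⟨w, hw, hFw⟩ := d_of_S hS
    obtain ⟨m, hm⟩ := e_surj hw
    exact ⟨m, by rw [h, hm, hFw]⟩

open Classical in
/-- The c.e.-preserving non-computable surjection. -/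
noncomputable def g (n : ℕ) : ℕ :=
  if hn : ∃ m, h m = n then Nat.find hn + 1 else 0

theorem g_h (m : ℕ) : g (h m) = m + 1 := by
  have hp : ∃ k, h k = h m := ⟨m, rfl⟩
  unfold g
  rw [dif_pos hp]
  congr 1
  exact h_injective (Nat.find_spec hp)

theorem g_eq_zero_iff (n : ℕ) : g n = 0 ↔ ¬S n := by
  unfold g
  by_cases hn : ∃ m, h m = n
  · rw [dif_pos hn]
    exact iff_of_false (Nat.succ_ne_zero _) (not_not_intro (h_range.1 hn))
  · rw [dif_neg hn]
    exact iff_of_true rfl fun hS => hn (h_range.2 hS)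

theorem exists_not_S : ∃ n, ¬S n := by
  by_contra hc
  push_neg at hc
  apply S_not_computable
  have htriv : ComputablePred fun _ : ℕ => True :=
    ComputablePred.computable_iff.2 ⟨fun _ => true, Computable.const true, by funext n; simp⟩
  exact htriv.of_eq fun n => iff_of_true trivial (hc n)

theorem g_surjective : Function.Surjective g := by
  intro v
  cases v with
  | zero =>
    obtain ⟨n, hn⟩ := exists_not_S
    exact ⟨n, (g_eq_zero_iff n).2 hn⟩
  | succ k => exact ⟨h k, g_h k⟩

theorem g_not_computable : ¬Computable g := by
  intro hg
  apply S_not_computable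
  have h1 : ComputablePred fun n => g n = 0 :=
    ComputablePred.computable_iff.2
      ⟨fun n => decide (g n = 0), Primrec.eq.decide.to_comp.comp hg (Computable.const 0),
        by funext n; simp⟩
  have h2 : ComputablePred fun n => ¬S n := h1.of_eq fun n => g_eq_zero_iff n
  exact h2.not.of_eq fun n => not_not

theorem mem_image_iff (A : Set ℕ) (x : ℕ) :
    x ∈ g '' A ↔ (x = 0 ∧ ∃ n ∈ A, ¬S n) ∨ ∃ m, h m ∈ A ∧ x = m + 1 := by
  constructor
  · rintro ⟨n, hnA, rfl⟩
    by_cases hn : ∃ m, h m = n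
    · obtain ⟨m, rfl⟩ := hn
      exact Or.inr ⟨m, hnA, g_h m⟩
    · refine Or.inl ⟨?_, n, hnA, fun hS => hn (h_range.2 hS)⟩
      exact (g_eq_zero_iff n).2 fun hS => hn (h_range.2 hS)
  · rintro (⟨rfl, n, hnA, hnS⟩ | ⟨m, hmA, rfl⟩)
    · exact ⟨n, hnA, (g_eq_zero_iff n).2 hnS⟩
    · exact ⟨h m, hmA, g_h m⟩

theorem assert_congr {p q : Prop} (hpq : p ↔ q) :
    (Part.assert p fun _ => Part.some ()) = Part.assert q fun _ => Part.some () := by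
  have := propext hpq
  subst this
  rfl

theorem g_preserves (A : Set ℕ) (hA : REPred (· ∈ A)) : REPred (· ∈ g '' A) := by
  have hbase : Partrec fun x : ℕ => Part.assert (h (x - 1) ∈ A) fun _ => Part.some () :=
    Partrec.comp hA (h_computable.comp Primrec.pred.to_comp)
  have hzero : Computable fun x : ℕ => decide (x = 0) :=
    Primrec.eq.decide.to_comp.comp Computable.id (Computable.const 0)
  by_cases hQ : ∃ n ∈ A, ¬S n
  · have hp : Partrec fun x : ℕ =>
        bif decide (x = 0) then Part.some ()
        else Part.assert (h (x - 1) ∈ A) fun _ => Part.some () :=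
      Partrec.cond hzero (Partrec.const' (Part.some ())) hbase
    refine hp.of_eq fun x => ?_
    by_cases hx : x = 0
    · subst hx
      have h0 : (0 : ℕ) ∈ g '' A := (mem_image_iff A 0).2 (Or.inl ⟨rfl, hQ⟩)
      rw [Part.assert_pos h0]
      simp
    · have hiff : (x ∈ g '' A) ↔ (h (x - 1) ∈ A) := by
        rw [mem_image_iff]
        constructor
        · rintro (⟨h0, -⟩ | ⟨m, hmA, rfl⟩)
          · exact absurd h0 hx
          · simpa using hmA
        · intro hA'
          exact Or.inr ⟨x - 1, hA', by omega⟩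
      rw [decide_eq_false hx, Bool.cond_false]
      exact (assert_congr hiff).symm
  · have hp : Partrec fun x : ℕ =>
        bif decide (x = 0) then (Part.none : Part Unit)
        else Part.assert (h (x - 1) ∈ A) fun _ => Part.some () :=
      Partrec.cond hzero Partrec.none hbase
    refine hp.of_eq fun x => ?_
    by_cases hx : x = 0
    · subst hx
      have h0 : (0 : ℕ) ∉ g '' A := by
        rw [mem_image_iff]
        rintro (⟨-, hQ'⟩ | ⟨m, -, hm⟩)
        · exact hQ hQ'
        · exact absurd hm (by omega)
      rw [Part.assert_neg h0]
      simp
    · have hiff : (x ∈ g '' A) ↔ (h (x - 1) ∈ A) := by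
        rw [mem_image_iff]
        constructor
        · rintro (⟨h0, -⟩ | ⟨m, hmA, rfl⟩)
          · exact absurd h0 hx
          · simpa using hmA
        · intro hA'
          exact Or.inr ⟨x - 1, hA', by omega⟩
      rw [decide_eq_false hx, Bool.cond_false]
      exact (assert_congr hiff).symm

end RePreserve

theorem exists_rePreserving_not_computable :
    ∃ g : ℕ → ℕ, Function.Surjective g ∧
      (∀ A : Set ℕ, REPred (· ∈ A) → REPred (· ∈ g '' A)) ∧ ¬ Computable g :=
  ⟨RePreserve.g, RePreserve.g_surjective, RePreserve.g_preserves, RePreserve.g_not_computable⟩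
end
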